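/- The overlap between the intermediate target state |ω⟩ and the initial state |s⟩ equals ⟨ω|s⟩ = √(‖A‖₁/N) · 2^{g/2}/√(2^g−1), where A_i = ∑_{j=0}^{g-1} 2^{-(j+1)} A_{ij} for bits A_{ij} ∈ {0,1}. -/

import Mathlib

open Finset Real

/-- the overlap ⟨ω|s⟩ between the intermediate target state and the initial
    state equals √(‖A‖₁/N) · 2^{g/2}/√(2^g−1). -/
theorem stmt_3 (N g : ℕ) (hN : 1 ≤ N) (hg : 1 ≤ g)
    (A : Fin N → Fin g → ℝ)
    (hbits : ∀ i j, A i j = 0 ∨ A i j = 1)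
    (Amp : Fin N → ℝ)
    (hAmp : ∀ i, Amp i = ∑ j : Fin g, ((2 : ℝ) ^ (j.1 + 1))⁻¹ * A i j)
    (hL1 : 0 < ∑ i, Amp i) :
    ∑ i : Fin N, ∑ j : Fin g,
        ((2 : ℝ) ^ (-((j.1 : ℝ) + 1) / 2) * A i j / Real.sqrt (∑ i', Amp i')) *
          ((2 : ℝ) ^ (((g : ℝ) - (j.1 : ℝ) - 1) / 2) /
            (Real.sqrt N * Real.sqrt ((2 : ℝ) ^ g - 1))) =
      Real.sqrt ((∑ i, Amp i) / N) * (2 : ℝ) ^ ((g : ℝ) / 2) / Real.sqrt ((2 : ℝ) ^ g - 1) := by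
  set L : ℝ := ∑ i, Amp i with hL
  have hLpos : 0 < L := hL1
  have hsL : Real.sqrt L ≠ 0 := by positivity
  have hNpos : (0:ℝ) < N := by exact_mod_cast hN
  have hsN : Real.sqrt N ≠ 0 := by positivity
  have hGpos : (0:ℝ) < (2:ℝ) ^ g - 1 := by
    have : (2:ℝ) ^ 1 ≤ (2:ℝ) ^ g := pow_le_pow_right₀ (by norm_num) hg
    simpa using lt_of_lt_of_le (by norm_num) this
  have hsG : Real.sqrt ((2:ℝ) ^ g - 1) ≠ 0 := by positivity
  set C : ℝ := (2:ℝ) ^ ((g:ℝ)/2) / (Real.sqrt L * (Real.sqrt N * Real.sqrt ((2:ℝ)^g - 1)))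
    with hC
  have key : ∀ (i : Fin N) (j : Fin g),
      ((2 : ℝ) ^ (-((j.1 : ℝ) + 1) / 2) * A i j / Real.sqrt L) *
          ((2 : ℝ) ^ (((g : ℝ) - (j.1 : ℝ) - 1) / 2) /
            (Real.sqrt N * Real.sqrt ((2 : ℝ) ^ g - 1))) =
      C * (((2 : ℝ) ^ (j.1 + 1))⁻¹ * A i j) := by
    intro i j
    have h1 : (2:ℝ) ^ (-((j.1:ℝ)+1)/2) * (2:ℝ) ^ (((g:ℝ)-(j.1:ℝ)-1)/2)
        = (2:ℝ) ^ ((g:ℝ)/2) * ((2:ℝ) ^ (j.1+1))⁻¹ := by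
      rw [← Real.rpow_natCast 2 (j.1+1), ← Real.rpow_neg (by norm_num),
        ← Real.rpow_add (by norm_num), ← Real.rpow_add (by norm_num)]
      congr 1
      push_cast
      ring
    have h2 : (2:ℝ) ^ (-((j.1:ℝ)+1)/2) * A i j / Real.sqrt L *
        ((2:ℝ) ^ (((g:ℝ)-(j.1:ℝ)-1)/2) / (Real.sqrt N * Real.sqrt ((2:ℝ)^g - 1)))
        = ((2:ℝ) ^ (-((j.1:ℝ)+1)/2) * (2:ℝ) ^ (((g:ℝ)-(j.1:ℝ)-1)/2)) * A i j /
          (Real.sqrt L * (Real.sqrt N * Real.sqrt ((2:ℝ)^g - 1))) := by ring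
    rw [h2, h1, hC]
    ring
  calc ∑ i : Fin N, ∑ j : Fin g,
        ((2 : ℝ) ^ (-((j.1 : ℝ) + 1) / 2) * A i j / Real.sqrt L) *
          ((2 : ℝ) ^ (((g : ℝ) - (j.1 : ℝ) - 1) / 2) /
            (Real.sqrt N * Real.sqrt ((2 : ℝ) ^ g - 1)))
      = ∑ i : Fin N, ∑ j : Fin g, C * (((2 : ℝ) ^ (j.1 + 1))⁻¹ * A i j) := by
        exact Finset.sum_congr rfl fun i _ => Finset.sum_congr rfl fun j _ => key i j
    _ = C * L := by
        simp only [← Finset.mul_sum]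
        congr 1
        rw [hL]
        exact Finset.sum_congr rfl fun i _ => (hAmp i).symm
    _ = Real.sqrt (L / N) * (2 : ℝ) ^ ((g : ℝ) / 2) / Real.sqrt ((2 : ℝ) ^ g - 1) := by
        rw [hC, Real.sqrt_div hLpos.le]
        have hsq : Real.sqrt L * Real.sqrt L = L := Real.mul_self_sqrt hLpos.le
        field_simp
        linear_combination (-1 : ℝ) * hsq
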